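/- Let T be a tree with vertices x, y and f_T(x) > f_T(y), and let X be a rooted tree with at least 2 vertices. Let T' be obtained by identifying the root of X with y, and T'' by identifying the root of X with x. Then F(T'') > F(T'). -/

import Mathlib

open SimpleGraph

/-- The number of subtrees of a graph `G`. -/
noncomputable def numSubtrees {V : Type*} [Fintype V] (G : SimpleGraph V) : ℕ :=
  {S : Set V | S.Nonempty ∧ (G.induce S).Connected}.ncard

/-- The number of subtrees of `G` containing the vertex `v`. -/
noncomputable def numSubtreesContaining {V : Type*} [Fintype V] (G : SimpleGraph V) (v : V) : ℕ :=
  {S : Set V | v ∈ S ∧ (G.induce S).Connected}.ncard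

/-- The graph obtained from `T` and the rooted tree `(X, a0)` by identifying the root `a0`
of `X` with the vertex `x` of `T`. -/
def glue {V A : Type*} (T : SimpleGraph V) (x : V) (X : SimpleGraph A) (a0 : A) :
    SimpleGraph (V ⊕ {a : A // a ≠ a0}) :=
  SimpleGraph.fromRel (fun p q =>
    match p, q with
    | Sum.inl v, Sum.inl w => T.Adj v w
    | Sum.inr a, Sum.inr b => X.Adj a.1 b.1
    | Sum.inl v, Sum.inr a => v = x ∧ X.Adj a0 a.1
    | Sum.inr _, Sum.inl _ => False)

namespace GlueAux

variable {V A : Type*} {T : SimpleGraph V} {X : SimpleGraph A} {a0 : A}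

lemma glue_adj_inl_inl {x v w : V} :
    (glue T x X a0).Adj (Sum.inl v) (Sum.inl w) ↔ T.Adj v w := by
  constructor
  · rintro ⟨-, h | h⟩
    · exact h
    · exact h.symm
  · intro h
    exact ⟨by simpa using h.ne, Or.inl h⟩

lemma glue_adj_inr_inr {x : V} {a b : {a : A // a ≠ a0}} :
    (glue T x X a0).Adj (Sum.inr a) (Sum.inr b) ↔ X.Adj a.1 b.1 := by
  constructor
  · rintro ⟨-, h | h⟩
    · exact h
    · exact h.symm
  · intro h
    exact ⟨by simp [Subtype.ext_iff, h.ne], Or.inl h⟩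

lemma glue_adj_inl_inr {x v : V} {a : {a : A // a ≠ a0}} :
    (glue T x X a0).Adj (Sum.inl v) (Sum.inr a) ↔ v = x ∧ X.Adj a0 a.1 := by
  constructor
  · rintro ⟨-, h | h⟩
    · exact h
    · exact h.elim
  · intro h
    exact ⟨by simp, Or.inl h⟩

lemma glue_adj_inr_inl {x w : V} {a : {a : A // a ≠ a0}} :
    (glue T x X a0).Adj (Sum.inr a) (Sum.inl w) ↔ w = x ∧ X.Adj a0 a.1 :=
  ⟨fun h => glue_adj_inl_inr.1 h.symm, fun h => (glue_adj_inl_inr.2 h).symm⟩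

/-- The subset of the glued vertex set determined by `P ⊆ V` and `Qf ⊆ A`. -/
def liftSet (a0 : A) (P : Set V) (Qf : Set A) : Set (V ⊕ {a : A // a ≠ a0}) :=
  fun s => Sum.elim (· ∈ P) (fun a => a.1 ∈ Qf) s

@[simp] lemma inl_mem_liftSet {P : Set V} {Qf : Set A} {v : V} :
    Sum.inl v ∈ liftSet a0 P Qf ↔ v ∈ P := Iff.rfl

@[simp] lemma inr_mem_liftSet {P : Set V} {Qf : Set A} {a : {a : A // a ≠ a0}} :
    Sum.inr a ∈ liftSet a0 P Qf ↔ a.1 ∈ Qf := Iff.rfl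

/-- The subset of `A` determined by a subset of the glued vertex set, with the root added. -/
def Qfull (a0 : A) (S : Set (V ⊕ {a : A // a ≠ a0})) : Set A :=
  insert a0 {a | ∃ h : a ≠ a0, Sum.inr ⟨a, h⟩ ∈ S}

lemma inr_mem_iff_Qfull {S : Set (V ⊕ {a : A // a ≠ a0})} {a : {a : A // a ≠ a0}} :
    Sum.inr a ∈ S ↔ a.1 ∈ Qfull a0 S := by
  unfold Qfull
  rw [Set.mem_insert_iff]
  constructor
  · intro h
    exact Or.inr ⟨a.2, by simpa using h⟩
  · rintro (h | ⟨h, hm⟩)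
    · exact absurd h a.2
    · simpa using hm

lemma eq_liftSet (S : Set (V ⊕ {a : A // a ≠ a0})) :
    S = liftSet a0 (Sum.inl ⁻¹' S) (Qfull a0 S) := by
  ext s
  cases s with
  | inl v => rfl
  | inr a => exact inr_mem_iff_Qfull

/-- Recomposition: gluing a connected subset of `T` containing `x` with a connected
subset of `X` containing `a0` gives a connected subset of the glued graph. -/
lemma induce_adj' {V : Type*} {G : SimpleGraph V} {s : Set V} {u v : ↥s} :
    (G.induce s).Adj u v ↔ G.Adj u.1 v.1 := Iff.rfl

lemma recomp [DecidableEq A] (x : V) {P : Set V} {Qf : Set A} (hx : x ∈ P)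
    (hP : (T.induce P).Connected) (ha0 : a0 ∈ Qf) (hQ : (X.induce Qf).Connected) :
    ((glue T x X a0).induce (liftSet a0 P Qf)).Connected := by
  have hxmem : Sum.inl x ∈ liftSet a0 P Qf := hx
  let φ : T.induce P →g (glue T x X a0).induce (liftSet a0 P Qf) :=
    { toFun := fun v => ⟨Sum.inl v.1, v.2⟩
      map_rel' := fun {v w} h => induce_adj'.2 (glue_adj_inl_inl.2 (induce_adj'.1 h)) }
  let ψ : X.induce Qf →g (glue T x X a0).induce (liftSet a0 P Qf) :=
    { toFun := fun c => if h : c.1 = a0 then ⟨Sum.inl x, hx⟩ else ⟨Sum.inr ⟨c.1, h⟩, c.2⟩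
      map_rel' := by
        rintro ⟨c, hc⟩ ⟨d, hd⟩ hadj
        have hadj' : X.Adj c d := induce_adj'.1 hadj
        rw [induce_adj']
        dsimp only
        split_ifs with h1 h2 h2
        · exact absurd (h1.trans h2.symm) hadj'.ne
        · exact glue_adj_inl_inr.2 ⟨rfl, h1 ▸ hadj'⟩
        · exact glue_adj_inr_inl.2 ⟨rfl, h2 ▸ hadj'.symm⟩
        · exact glue_adj_inr_inr.2 hadj'
        }
  have key : ∀ u, ((glue T x X a0).induce (liftSet a0 P Qf)).Reachable u ⟨Sum.inl x, hxmem⟩ := by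
    rintro ⟨s, hs⟩
    cases s with
    | inl v =>
        have r : (T.induce P).Reachable ⟨v, hs⟩ ⟨x, hx⟩ := hP.preconnected _ _
        exact r.map φ
    | inr a =>
        have r : (X.induce Qf).Reachable ⟨a.1, hs⟩ ⟨a0, ha0⟩ := hQ.preconnected _ _
        have r2 := r.map ψ
        have e1 : ψ ⟨a.1, hs⟩ = ⟨Sum.inr a, hs⟩ := by
          show (if h : (a : A) = a0 then _ else _) = _
          rw [dif_neg a.2]
        have e2 : ψ ⟨a0, ha0⟩ = ⟨Sum.inl x, hxmem⟩ := by
          show (if h : a0 = a0 then _ else _) = _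
          rw [dif_pos rfl]
        rwa [e1, e2] at r2
  exact (connected_iff_exists_forall_reachable _).2 ⟨⟨Sum.inl x, hxmem⟩, fun u => (key u).symm⟩


section Decomp

variable {y : V} {S : Set (V ⊕ {a : A // a ≠ a0})}

/-- If a walk in the induced graph goes from an `inr` vertex to an `inl` vertex, then the
glue point `inl y` belongs to `S`. -/
lemma cross_aux :
    ∀ {s t : ↥S} (_ : ((glue T y X a0).induce S).Walk s t),
      (∃ a, s.1 = Sum.inr a) → (∃ v, t.1 = Sum.inl v) → Sum.inl y ∈ S := by
  intro s t W
  induction W with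
  | nil =>
      rintro ⟨a, ha⟩ ⟨v, hv⟩
      rw [ha] at hv
      exact (Sum.inr_ne_inl hv).elim
  | @cons s u t h p ih =>
      rintro ⟨a, ha⟩ hv
      rcases hu : u.1 with w | b
      · have hadj : (glue T y X a0).Adj s.1 u.1 := induce_adj'.1 h
        rw [ha, hu] at hadj
        have hw := (glue_adj_inr_inl.1 hadj).1
        have := u.2
        rw [hu, hw] at this
        exact this
      · exact ih ⟨b, hu⟩ hv

/-- The projection to `V` of a vertex of `S`, sending the `X`-part to `y`. -/
lemma projV_mem (hy : Sum.inl y ∈ S) (s : ↥S) :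
    Sum.elim id (fun _ => y) s.1 ∈ Sum.inl ⁻¹' S := by
  obtain ⟨s, hs⟩ := s
  cases s with
  | inl v => exact hs
  | inr a => exact hy

lemma step_reachV (hy : Sum.inl y ∈ S) (s u : ↥S)
    (h : ((glue T y X a0).induce S).Adj s u) :
    (T.induce (Sum.inl ⁻¹' S)).Reachable ⟨_, projV_mem hy s⟩ ⟨_, projV_mem hy u⟩ := by
  have hadj : (glue T y X a0).Adj s.1 u.1 := induce_adj'.1 h
  obtain ⟨s1, hs1⟩ := s
  obtain ⟨u1, hu1⟩ := u
  cases s1 with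
  | inl v =>
      cases u1 with
      | inl w =>
          exact Adj.reachable (induce_adj'.2 (glue_adj_inl_inl.1 hadj))
      | inr a =>
          have hv : v = y := (glue_adj_inl_inr.1 hadj).1
          cases hv
          exact Reachable.refl _
  | inr a =>
      cases u1 with
      | inl w =>
          have hw : w = y := (glue_adj_inr_inl.1 hadj).1
          cases hw
          exact Reachable.refl _
      | inr b => exact Reachable.refl _

lemma walk_reachV (hy : Sum.inl y ∈ S) :
    ∀ {s t : ↥S} (_ : ((glue T y X a0).induce S).Walk s t),
      (T.induce (Sum.inl ⁻¹' S)).Reachable ⟨_, projV_mem hy s⟩ ⟨_, projV_mem hy t⟩ := by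
  intro s t W
  induction W with
  | nil => exact Reachable.refl _
  | @cons s u t h p ih => exact (step_reachV hy s u h).trans ih

/-- The projection to `A` of a vertex of `S`, sending the `T`-part to `a0`. -/
lemma projA_mem (s : ↥S) : Sum.elim (fun _ => a0) Subtype.val s.1 ∈ Qfull a0 S := by
  obtain ⟨s, hs⟩ := s
  cases s with
  | inl v => exact Set.mem_insert _ _
  | inr a => exact inr_mem_iff_Qfull.1 hs

lemma step_reachA (s u : ↥S) (h : ((glue T y X a0).induce S).Adj s u) :
    (X.induce (Qfull a0 S)).Reachable ⟨_, projA_mem s⟩ ⟨_, projA_mem u⟩ := by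
  have hadj : (glue T y X a0).Adj s.1 u.1 := induce_adj'.1 h
  obtain ⟨s1, hs1⟩ := s
  obtain ⟨u1, hu1⟩ := u
  cases s1 with
  | inl v =>
      cases u1 with
      | inl w => exact Reachable.refl _
      | inr a =>
          exact Adj.reachable (induce_adj'.2 (glue_adj_inl_inr.1 hadj).2)
  | inr a =>
      cases u1 with
      | inl w =>
          exact Adj.reachable (induce_adj'.2 ((glue_adj_inr_inl.1 hadj).2).symm)
      | inr b => exact Adj.reachable (induce_adj'.2 (glue_adj_inr_inr.1 hadj))

lemma walk_reachA :
    ∀ {s t : ↥S} (_ : ((glue T y X a0).induce S).Walk s t),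
      (X.induce (Qfull a0 S)).Reachable ⟨_, projA_mem s⟩ ⟨_, projA_mem t⟩ := by
  intro s t W
  induction W with
  | nil => exact Reachable.refl _
  | @cons s u t h p ih => exact (step_reachA s u h).trans ih

/-- Decomposition of a mixed connected subset of the glued graph. -/
lemma decomp (hS : ((glue T y X a0).induce S).Connected)
    (hl : ∃ v, Sum.inl v ∈ S) (hr : ∃ a : {a : A // a ≠ a0}, Sum.inr a ∈ S) :
    Sum.inl y ∈ S ∧ (y ∈ Sum.inl ⁻¹' S ∧ (T.induce (Sum.inl ⁻¹' S)).Connected) ∧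
      (X.induce (Qfull a0 S)).Connected := by
  obtain ⟨v, hv⟩ := hl
  obtain ⟨a, ha⟩ := hr
  have hy : Sum.inl y ∈ S := by
    have hreach := hS.preconnected ⟨Sum.inr a, ha⟩ ⟨Sum.inl v, hv⟩
    exact hreach.elim fun W => cross_aux W ⟨a, rfl⟩ ⟨v, rfl⟩
  refine ⟨hy, ⟨hy, ?_⟩, ?_⟩
  · refine (connected_iff_exists_forall_reachable _).2 ⟨⟨y, hy⟩, ?_⟩
    rintro ⟨q, hq⟩
    have hreach := hS.preconnected ⟨Sum.inl y, hy⟩ ⟨Sum.inl q, hq⟩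
    exact hreach.elim fun W => walk_reachV hy W
  · refine (connected_iff_exists_forall_reachable _).2 ⟨⟨a0, Set.mem_insert _ _⟩, ?_⟩
    rintro ⟨c, hc⟩
    rcases hc with rfl | ⟨hne, hmem⟩
    · exact Reachable.refl _
    · have hreach := hS.preconnected ⟨Sum.inl y, hy⟩ ⟨Sum.inr ⟨c, hne⟩, hmem⟩
      exact hreach.elim fun W => walk_reachA W

end Decomp

/-- If `S` is pure (entirely in one side), the induced glued graphs agree for any glue points. -/
lemma induce_pure_eq (x y : V) {S : Set (V ⊕ {a : A // a ≠ a0})}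
    (h : (∀ s ∈ S, ∃ v, s = Sum.inl v) ∨ (∀ s ∈ S, ∃ a, s = Sum.inr a)) :
    (glue T y X a0).induce S = (glue T x X a0).induce S := by
  ext ⟨s, hs⟩ ⟨t, ht⟩
  rcases h with h | h
  · obtain ⟨v, rfl⟩ := h s hs
    obtain ⟨w, rfl⟩ := h t ht
    rw [induce_adj', induce_adj', glue_adj_inl_inl, glue_adj_inl_inl]
  · obtain ⟨a, rfl⟩ := h s hs
    obtain ⟨b, rfl⟩ := h t ht
    rw [induce_adj', induce_adj', glue_adj_inr_inr, glue_adj_inr_inr]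

end GlueAux



open GlueAux in
theorem glue_subtree_count_compare {V A : Type*} [Fintype V] [Fintype A] [DecidableEq A]
    (T : SimpleGraph V) (X : SimpleGraph A) (a0 : A)
    (hT : T.IsTree) (hX : X.IsTree) (hA : 2 ≤ Fintype.card A)
    (x y : V)
    (hf : numSubtreesContaining T y < numSubtreesContaining T x) :
    numSubtrees (glue T y X a0) < numSubtrees (glue T x X a0) := by
  classical
  set Cy : Set (Set V) := {P | y ∈ P ∧ (T.induce P).Connected} with hCydef
  set Cx : Set (Set V) := {P | x ∈ P ∧ (T.induce P).Connected} with hCxdef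
  have hflt : Cy.ncard < Cx.ncard := hf
  haveI : Fintype ↥Cy := (Set.toFinite Cy).fintype
  haveI : Fintype ↥Cx := (Set.toFinite Cx).fintype
  have hcards : Fintype.card ↥Cy < Fintype.card ↥Cx := by
    rwa [← Nat.card_coe_set_eq, ← Nat.card_coe_set_eq, Nat.card_eq_fintype_card,
      Nat.card_eq_fintype_card] at hflt
  obtain ⟨g⟩ := Function.Embedding.nonempty_of_card_le hcards.le
  have hgns : ∃ P : ↥Cx, P ∉ Set.range g := by
    by_contra hsurj
    push_neg at hsurj
    have hs : Function.Surjective g := fun P => hsurj P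
    exact absurd (Fintype.card_le_of_surjective g hs) (by omega)
  obtain ⟨Pstar, hPstar⟩ := hgns
  -- the neighbour of the root
  obtain ⟨b, hb⟩ : ∃ b, X.Adj a0 b := by
    obtain ⟨a1, ha1⟩ := Fintype.exists_ne_of_one_lt_card (by omega) a0
    have hr := hX.isConnected.preconnected a0 a1
    refine hr.elim fun w => ?_
    cases w with
    | nil => exact absurd rfl ha1.symm
    | cons h p => exact ⟨_, h⟩
  have hbne : b ≠ a0 := hb.ne'
  set Dy : Set (Set (V ⊕ {a : A // a ≠ a0})) :=
    {S | S.Nonempty ∧ ((glue T y X a0).induce S).Connected} with hDydef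
  set Dx : Set (Set (V ⊕ {a : A // a ≠ a0})) :=
    {S | S.Nonempty ∧ ((glue T x X a0).induce S).Connected} with hDxdef
  show Dy.ncard < Dx.ncard
  set Φ : Set (V ⊕ {a : A // a ≠ a0}) → Set (V ⊕ {a : A // a ≠ a0}) :=
    fun S => if h : (Sum.inl ⁻¹' S ∈ Cy) ∧ (∃ a : {a : A // a ≠ a0}, Sum.inr a ∈ S)
      then liftSet a0 ((g ⟨Sum.inl ⁻¹' S, h.1⟩ : ↥Cx) : Set V) (Qfull a0 S)
      else S with hΦdef
  -- purity for sets where the dichotomy fails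
  have pure_of_not : ∀ S ∈ Dy,
      ¬((Sum.inl ⁻¹' S ∈ Cy) ∧ (∃ a : {a : A // a ≠ a0}, Sum.inr a ∈ S)) →
      ((∀ s ∈ S, ∃ v, s = Sum.inl v) ∨ (∀ s ∈ S, ∃ a, s = Sum.inr a)) := by
    intro S hS hneg
    by_contra hcon
    push_neg at hcon
    obtain ⟨⟨s1, hs1, hs1'⟩, s2, hs2, hs2'⟩ := hcon
    obtain ⟨a, rfl⟩ : ∃ a, s1 = Sum.inr a := by
      cases s1 with
      | inl v => exact absurd rfl (hs1' v)
      | inr a => exact ⟨a, rfl⟩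
    obtain ⟨v, rfl⟩ : ∃ v, s2 = Sum.inl v := by
      cases s2 with
      | inl v => exact ⟨v, rfl⟩
      | inr a => exact absurd rfl (hs2' a)
    have hdec := decomp hS.2 ⟨v, hs2⟩ ⟨a, hs1⟩
    exact hneg ⟨⟨hdec.2.1.1, hdec.2.1.2⟩, ⟨a, hs1⟩⟩
  -- Φ maps Dy into Dx
  have hmaps : ∀ S ∈ Dy, Φ S ∈ Dx := by
    intro S hS
    by_cases h : (Sum.inl ⁻¹' S ∈ Cy) ∧ (∃ a : {a : A // a ≠ a0}, Sum.inr a ∈ S)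
    · rw [hΦdef]
      simp only [dif_pos h]
      obtain ⟨hPy, a, ha⟩ := h
      have hdec := decomp hS.2 ⟨y, hPy.1⟩ ⟨a, ha⟩
      have hmem : x ∈ ((g ⟨Sum.inl ⁻¹' S, hPy⟩ : ↥Cx) : Set V) :=
        (g ⟨Sum.inl ⁻¹' S, hPy⟩).2.1
      exact ⟨⟨Sum.inl x, hmem⟩,
        recomp x hmem (g ⟨Sum.inl ⁻¹' S, hPy⟩).2.2 (Set.mem_insert _ _) hdec.2.2⟩
    · rw [hΦdef]
      simp only [dif_neg h]
      refine ⟨hS.1, ?_⟩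
      rw [← induce_pure_eq x y (pure_of_not S hS h)]
      exact hS.2
  -- recovery facts in the dichotomy case
  have hpre : ∀ (S : Set (V ⊕ {a : A // a ≠ a0}))
      (h : (Sum.inl ⁻¹' S ∈ Cy) ∧ (∃ a : {a : A // a ≠ a0}, Sum.inr a ∈ S)),
      Sum.inl ⁻¹' (Φ S) = ((g ⟨Sum.inl ⁻¹' S, h.1⟩ : ↥Cx) : Set V) ∧
        (∀ a : {a : A // a ≠ a0}, Sum.inr a ∈ Φ S ↔ Sum.inr a ∈ S) := by
    intro S h
    rw [hΦdef]
    simp only [dif_pos h]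
    exact ⟨rfl, fun a => (inr_mem_liftSet.trans inr_mem_iff_Qfull.symm)⟩
  -- injectivity
  have hinj : Set.InjOn Φ Dy := by
    intro S1 h1 S2 h2 heq
    by_cases c1 : (Sum.inl ⁻¹' S1 ∈ Cy) ∧ (∃ a : {a : A // a ≠ a0}, Sum.inr a ∈ S1) <;>
      by_cases c2 : (Sum.inl ⁻¹' S2 ∈ Cy) ∧ (∃ a : {a : A // a ≠ a0}, Sum.inr a ∈ S2)
    · obtain ⟨e1, f1⟩ := hpre S1 c1
      obtain ⟨e2, f2⟩ := hpre S2 c2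
      have hgeq : (g ⟨Sum.inl ⁻¹' S1, c1.1⟩ : ↥Cx) = g ⟨Sum.inl ⁻¹' S2, c2.1⟩ :=
        Subtype.ext (by rw [← e1, ← e2, heq])
      have hPs : Sum.inl ⁻¹' S1 = Sum.inl ⁻¹' S2 :=
        congrArg Subtype.val (g.injective hgeq)
      ext s
      cases s with
      | inl v =>
          constructor
          · intro hv
            have : v ∈ Sum.inl ⁻¹' S1 := hv
            rw [hPs] at this
            exact this
          · intro hv
            have : v ∈ Sum.inl ⁻¹' S2 := hv
            rw [← hPs] at this
            exact this
      | inr a => rw [← f1 a, ← f2 a, heq]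
    · exfalso
      obtain ⟨a, ha⟩ := c1.2
      have hmix1 : Sum.inr a ∈ Φ S1 := ((hpre S1 c1).2 a).2 ha
      have hmix2 : Sum.inl x ∈ Φ S1 := by
        rw [hΦdef]
        simp only [dif_pos c1]
        exact (g ⟨Sum.inl ⁻¹' S1, c1.1⟩).2.1
      have hS2eq : Φ S2 = S2 := by rw [hΦdef]; simp only [dif_neg c2]
      rw [heq, hS2eq] at hmix1 hmix2
      rcases pure_of_not S2 h2 c2 with hp | hp
      · obtain ⟨v, hv⟩ := hp _ hmix1
        exact (Sum.inr_ne_inl hv).elim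
      · obtain ⟨a', ha'⟩ := hp _ hmix2
        exact (Sum.inl_ne_inr ha').elim
    · exfalso
      obtain ⟨a, ha⟩ := c2.2
      have hmix1 : Sum.inr a ∈ Φ S2 := ((hpre S2 c2).2 a).2 ha
      have hmix2 : Sum.inl x ∈ Φ S2 := by
        rw [hΦdef]
        simp only [dif_pos c2]
        exact (g ⟨Sum.inl ⁻¹' S2, c2.1⟩).2.1
      have hS1eq : Φ S1 = S1 := by rw [hΦdef]; simp only [dif_neg c1]
      rw [← heq, hS1eq] at hmix1 hmix2
      rcases pure_of_not S1 h1 c1 with hp | hp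
      · obtain ⟨v, hv⟩ := hp _ hmix1
        exact (Sum.inr_ne_inl hv).elim
      · obtain ⟨a', ha'⟩ := hp _ hmix2
        exact (Sum.inl_ne_inr ha').elim
    · have hS1eq : Φ S1 = S1 := by rw [hΦdef]; simp only [dif_neg c1]
      have hS2eq : Φ S2 = S2 := by rw [hΦdef]; simp only [dif_neg c2]
      rw [hS1eq, hS2eq] at heq
      exact heq
  -- the missed subtree
  set W : Set (V ⊕ {a : A // a ≠ a0}) :=
    liftSet a0 (Pstar : Set V) (insert a0 {b}) with hWdef
  have hWDx : W ∈ Dx := by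
    have hconn2 : (X.induce (insert a0 ({b} : Set A))).Connected := by
      refine (connected_iff_exists_forall_reachable _).2 ⟨⟨a0, Set.mem_insert _ _⟩, ?_⟩
      rintro ⟨c, rfl | hc⟩
      · exact Reachable.refl _
      · rw [Set.mem_singleton_iff] at hc
        subst hc
        exact Adj.reachable (induce_adj'.2 hb)
    exact ⟨⟨Sum.inl x, Pstar.2.1⟩, recomp x Pstar.2.1 Pstar.2.2 (Set.mem_insert _ _) hconn2⟩
  have hWmiss : W ∉ Φ '' Dy := by
    rintro ⟨S, hSD, hPhiS⟩
    by_cases hc : (Sum.inl ⁻¹' S ∈ Cy) ∧ (∃ a : {a : A // a ≠ a0}, Sum.inr a ∈ S)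
    · have e1 := (hpre S hc).1
      rw [hPhiS] at e1
      have hWpre : Sum.inl ⁻¹' W = (Pstar : Set V) := rfl
      rw [hWpre] at e1
      exact hPstar ⟨⟨Sum.inl ⁻¹' S, hc.1⟩, Subtype.ext e1.symm⟩
    · have hSeq : Φ S = S := by rw [hΦdef]; simp only [dif_neg hc]
      rw [hSeq] at hPhiS
      have hmix1 : Sum.inl x ∈ S := by
        rw [hPhiS]
        exact Pstar.2.1
      have hmix2 : Sum.inr (⟨b, hbne⟩ : {a : A // a ≠ a0}) ∈ S := by
        rw [hPhiS]
        show b ∈ insert a0 ({b} : Set A)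
        exact Set.mem_insert_iff.2 (Or.inr rfl)
      rcases pure_of_not S hSD hc with hp | hp
      · obtain ⟨v, hv⟩ := hp _ hmix2
        exact (Sum.inr_ne_inl hv).elim
      · obtain ⟨a', ha'⟩ := hp _ hmix1
        exact (Sum.inl_ne_inr ha').elim
  have hsub : Φ '' Dy ⊆ Dx := by
    rintro W' ⟨S, hS, rfl⟩
    exact hmaps S hS
  have hss : Φ '' Dy ⊂ Dx := (Set.ssubset_iff_of_subset hsub).2 ⟨W, hWDx, hWmiss⟩
  calc Dy.ncard = (Φ '' Dy).ncard := (Set.ncard_image_of_injOn hinj).symm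
    _ < Dx.ncard := Set.ncard_lt_ncard hss (Set.toFinite _)
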